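/- Let f be an entire function of order ρ with 0 < ρ < 1. Then f has infinitely many zeros, i.e., the set {w ∈ ℂ : f(w) = 0} is infinite. -/

import Mathlib

open Filter

/-- The maximum modulus `M_f(r) = sup_{|w| = r} |f w|`. -/
noncomputable def maxModulus (f : ℂ → ℂ) (r : ℝ) : ℝ :=
  sSup ((fun w => ‖f w‖) '' Metric.sphere (0 : ℂ) r)

/-- The order of an entire function,
`ρ = limsup_{r → ∞} (log log M_f(r)) / (log r)`, as an extended real number. -/
noncomputable def entireOrder (f : ℂ → ℂ) : EReal :=
  Filter.limsup
    (fun r : ℝ => ((Real.log (Real.log (maxModulus f r)) / Real.log r : ℝ) : EReal))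
    Filter.atTop

open Metric Set Nat

lemma exists_primitive (f : ℂ → ℂ) (hf : Differentiable ℂ f) :
    ∃ F : ℂ → ℂ, ∀ z, HasDerivAt F (f z) z := by
  set a : ℕ → ℂ := fun n => (n ! : ℂ)⁻¹ * iteratedDeriv n f 0 with ha
  have hsum : ∀ z : ℂ, HasSum (fun n => a n * z ^ n) (f z) := by
    intro z
    have := Complex.hasSum_taylorSeries_of_entire hf 0 z
    simp only [sub_zero, smul_eq_mul] at this
    have e : (fun n => a n * z ^ n) = fun n => (n ! : ℂ)⁻¹ * (z ^ n * iteratedDeriv n f 0) := by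
      funext n; simp only [ha]; ring
    rw [e]; exact this
  set g : ℕ → ℂ → ℂ := fun n z => (n + 1 : ℂ)⁻¹ * a n * z ^ (n + 1) with hg
  have hderiv : ∀ n (z : ℂ), HasDerivAt (g n) (a n * z ^ n) z := by
    intro n z
    have h1 : HasDerivAt (fun z : ℂ => z ^ (n + 1)) ((n + 1 : ℂ) * z ^ n) z := by
      simpa using hasDerivAt_pow (n + 1) z
    have := h1.const_mul ((n + 1 : ℂ)⁻¹ * a n)
    refine this.congr_deriv ?_
    have hne : (n + 1 : ℂ) ≠ 0 := Nat.cast_add_one_ne_zero n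
    field_simp
  refine ⟨fun z => ∑' n, g n z, fun z₀ => ?_⟩
  set R : ℝ := ‖z₀‖ + 1 with hR
  have hR0 : 0 < R := by positivity
  -- summability bound on ball 0 R
  have hs2R : Summable (fun n => a n * (2 * R : ℂ) ^ n) := (hsum _).summable
  have hbdd : BddAbove (Set.range fun n => ‖a n * (2 * R : ℂ) ^ n‖) :=
    (hs2R.tendsto_atTop_zero.norm.bddAbove_range)
  obtain ⟨C, hC⟩ := hbdd
  have hCle : ∀ n, ‖a n‖ * (2 * R) ^ n ≤ C := by
    intro n
    have := hC (Set.mem_range_self n)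
    simpa [norm_mul, norm_pow, abs_of_pos hR0] using this
  set u : ℕ → ℝ := fun n => ‖a n‖ * R ^ n with hu
  have hu_sum : Summable u := by
    have h2 : Summable (fun n : ℕ => C * (1 / 2 : ℝ) ^ n) :=
      (summable_geometric_of_lt_one (by norm_num) (by norm_num)).mul_left C
    refine Summable.of_nonneg_of_le (fun n => by positivity) (fun n => ?_) h2
    have h3 : ‖a n‖ * R ^ n = (‖a n‖ * (2 * R) ^ n) * (1 / 2) ^ n := by
      have h4 : ((2:ℝ) * R) ^ n * (1/2)^n = R ^ n := by
        rw [← mul_pow]; congr 1; ring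
      rw [mul_assoc, h4]
    calc u n = (‖a n‖ * (2 * R) ^ n) * (1 / 2) ^ n := h3
      _ ≤ C * (1 / 2) ^ n := by
          have : (0:ℝ) ≤ (1/2 : ℝ) ^ n := by positivity
          exact mul_le_mul_of_nonneg_right (hCle n) this
  have key := hasDerivAt_tsum_of_isPreconnected hu_sum isOpen_ball
    (convex_ball (0:ℂ) R).isPreconnected
    (fun n y (_ : y ∈ ball (0:ℂ) R) => hderiv n y)
    (fun n y hy => by
      have : ‖y‖ ≤ R := le_of_lt (mem_ball_zero_iff.mp hy)
      calc ‖a n * y ^ n‖ = ‖a n‖ * ‖y‖ ^ n := by rw [norm_mul, norm_pow]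
        _ ≤ ‖a n‖ * R ^ n := by
            exact mul_le_mul_of_nonneg_left (pow_le_pow_left₀ (norm_nonneg _) this n)
              (norm_nonneg _)
    )
    (mem_ball_self hR0)
    (by
      refine Summable.congr summable_zero (fun n => ?_)
      simp [hg])
    (show z₀ ∈ ball (0:ℂ) R from mem_ball_zero_iff.mpr (by simp [hR]))
  have := (hsum z₀).tsum_eq
  rw [this] at key
  exact key

lemma exists_exp_eq (h : ℂ → ℂ) (hd : Differentiable ℂ h) (hne : ∀ z, h z ≠ 0) :
    ∃ g : ℂ → ℂ, Differentiable ℂ g ∧ ∀ z, h z = Complex.exp (g z) := by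
  have hφ : Differentiable ℂ (fun z => deriv h z / h z) := by
    have han : AnalyticOnNhd ℂ h Set.univ := fun z _ => hd.analyticAt z
    have hder : AnalyticOnNhd ℂ (deriv h) Set.univ := han.deriv
    exact Differentiable.div (fun z => (hder z (Set.mem_univ z)).differentiableAt) hd hne
  obtain ⟨G, hG⟩ := exists_primitive _ hφ
  set u : ℂ → ℂ := fun z => h z * Complex.exp (-G z) with hu
  have hu' : ∀ z, HasDerivAt u 0 z := by
    intro z
    have h1 : HasDerivAt h (deriv h z) z := (hd z).hasDerivAt
    have h2 : HasDerivAt (fun w => Complex.exp (-G w))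
        (Complex.exp (-G z) * (-(deriv h z / h z))) z := ((hG z).neg).cexp
    have := h1.mul h2
    refine this.congr_deriv ?_
    field_simp [hne z]
    ring
  have hconst : ∀ z, u z = u 0 := by
    intro z
    exact is_const_of_deriv_eq_zero (fun w => (hu' w).differentiableAt)
      (fun w => (hu' w).deriv) z 0
  have hc0 : u 0 ≠ 0 := mul_ne_zero (hne 0) (Complex.exp_ne_zero _)
  refine ⟨fun z => G z + Complex.log (u 0), fun z => (hG z).differentiableAt.add_const _, ?_⟩
  intro z
  rw [Complex.exp_add, Complex.exp_log hc0]
  have := hconst z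
  rw [hu] at this
  have h2 : h z = u 0 * Complex.exp (G z) := by
    have h3 : u 0 = h z * Complex.exp (-G z) := (hconst z).symm
    rw [h3, mul_assoc, ← Complex.exp_add, neg_add_cancel, Complex.exp_zero, mul_one]
  rw [h2]; ring

lemma factor_at (f : ℂ → ℂ) (hf : Differentiable ℂ f) (hne : ∃ z, f z ≠ 0) (a : ℂ) :
    ∃ (m : ℕ) (g : ℂ → ℂ), Differentiable ℂ g ∧ g a ≠ 0 ∧ ∀ z, f z = (z - a) ^ m * g z := by
  have han : AnalyticAt ℂ f a := hf.analyticAt a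
  have hnev : ¬ ∀ᶠ z in nhds a, f z = 0 := by
    intro hev
    obtain ⟨z, hz⟩ := hne
    have : EqOn f 0 Set.univ := by
      refine AnalyticOnNhd.eqOn_zero_of_preconnected_of_eventuallyEq_zero
        (fun w _ => hf.analyticAt w) isPreconnected_univ (Set.mem_univ a) ?_
      exact hev
    exact hz (this (Set.mem_univ z))
  obtain ⟨m, gl, hgl, hgl0, hev⟩ := han.exists_eventuallyEq_pow_smul_nonzero_iff.mpr hnev
  set g : ℂ → ℂ := fun z => if z = a then gl a else f z / (z - a) ^ m with hg
  have hga : g a = gl a := by simp [hg]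
  have hfeq : ∀ z, f z = (z - a) ^ m * g z := by
    intro z
    by_cases hz : z = a
    · subst hz
      have hfa : f z = (z - z) ^ m * gl z := hev.self_of_nhds
      rw [hfa, hga]
    · have hzm : (z - a) ^ m ≠ 0 := pow_ne_zero m (sub_ne_zero.mpr hz)
      simp only [hg, if_neg hz]
      field_simp
  have hgev : g =ᶠ[nhds a] gl := by
    filter_upwards [hev] with z hz
    by_cases hza : z = a
    · subst hza; simp [hg]
    · have hzm : (z - a) ^ m ≠ 0 := pow_ne_zero m (sub_ne_zero.mpr hza)
      simp only [hg, if_neg hza, hz, smul_eq_mul]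
      field_simp
  refine ⟨m, g, ?_, by rw [hga]; exact hgl0, hfeq⟩
  intro b
  by_cases hb : b = a
  · subst hb
    exact hgl.differentiableAt.congr_of_eventuallyEq hgev
  · have hmem : {z : ℂ | z ≠ a} ∈ nhds b := by
      exact IsOpen.mem_nhds isOpen_ne hb
    have hgev2 : g =ᶠ[nhds b] fun z => f z / (z - a) ^ m := by
      filter_upwards [hmem] with z hz
      simp [hg, if_neg hz]
    have hd : DifferentiableAt ℂ (fun z => f z / (z - a) ^ m) b := by
      exact DifferentiableAt.div (hf b) (by fun_prop) (pow_ne_zero m (sub_ne_zero.mpr hb))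
    exact hd.congr_of_eventuallyEq hgev2

lemma factor_finite_aux : ∀ (n : ℕ) (f : ℂ → ℂ), Differentiable ℂ f →
    ∀ (hfin : {w : ℂ | f w = 0}.Finite), hfin.toFinset.card ≤ n → (∃ z, f z ≠ 0) →
    ∃ (M : Multiset ℂ) (h : ℂ → ℂ), Differentiable ℂ h ∧ (∀ z, h z ≠ 0) ∧
      ∀ z, f z = (Multiset.map (fun a => z - a) M).prod * h z := by
  intro n
  induction n with
  | zero =>
    intro f hf hfin hcard hne
    refine ⟨0, f, hf, fun z => ?_, fun z => by simp⟩
    intro hz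
    have : z ∈ hfin.toFinset := by simp [hz]
    have := Finset.card_pos.mpr ⟨z, this⟩
    omega
  | succ n ih =>
    intro f hf hfin hcard hne
    by_cases hall : ∀ z, f z ≠ 0
    · exact ⟨0, f, hf, hall, fun z => by simp⟩
    · push_neg at hall
      obtain ⟨a, ha⟩ := hall
      obtain ⟨m, g, hgd, hga, hfac⟩ := factor_at f hf hne a
      have hm : m ≠ 0 := by
        intro hm0
        subst hm0
        have h5 := hfac a
        simp at h5
        rw [ha] at h5
        exact hga h5.symm
      have hsub : {w : ℂ | g w = 0} ⊆ {w : ℂ | f w = 0} \ {a} := by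
        intro w hw
        simp only [Set.mem_setOf_eq] at hw
        constructor
        · simp only [Set.mem_setOf_eq, hfac w, hw, mul_zero]
        · simp only [Set.mem_singleton_iff]
          intro hwa; subst hwa; exact hga hw
      have hgfin : {w : ℂ | g w = 0}.Finite := (Set.Finite.diff hfin : ({w : ℂ | f w = 0} \ {a}).Finite).subset hsub
      have hgcard : hgfin.toFinset.card ≤ n := by
        have h1 : hgfin.toFinset ⊆ hfin.toFinset.erase a := by
          intro w hw
          simp only [Set.Finite.mem_toFinset] at hw
          have := hsub hw
          simp only [Set.mem_diff, Set.mem_setOf_eq, Set.mem_singleton_iff] at this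
          exact Finset.mem_erase.mpr ⟨this.2, by simp [this.1]⟩
        have h2 := Finset.card_le_card h1
        have h3 : a ∈ hfin.toFinset := by simp [ha]
        rw [Finset.card_erase_of_mem h3] at h2
        omega
      obtain ⟨M, h, hh, hhne, hheq⟩ := ih g hgd hgfin hgcard ⟨a, hga⟩
      refine ⟨Multiset.replicate m a + M, h, hh, hhne, fun z => ?_⟩
      rw [hfac z, hheq z, Multiset.map_add, Multiset.prod_add, Multiset.map_replicate,
        Multiset.prod_replicate]
      ring

lemma factor_finite (f : ℂ → ℂ) (hf : Differentiable ℂ f)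
    (hfin : {w : ℂ | f w = 0}.Finite) (hne : ∃ z, f z ≠ 0) :
    ∃ (M : Multiset ℂ) (h : ℂ → ℂ), Differentiable ℂ h ∧ (∀ z, h z ≠ 0) ∧
      ∀ z, f z = (Multiset.map (fun a => z - a) M).prod * h z :=
  factor_finite_aux hfin.toFinset.card f hf hfin le_rfl hne

/-- Borel–Carathéodory type estimate via the Schwarz lemma. -/
lemma borel_caratheodory {p : ℂ → ℂ} (hp : Differentiable ℂ p) (hp0 : p 0 = 0)
    {R A : ℝ} (hR : 0 < R) (hA : 0 < A)
    (hbound : ∀ z ∈ ball (0:ℂ) (2*R), (p z).re < A) :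
    ∀ z : ℂ, ‖z‖ ≤ R → ‖p z‖ ≤ 2 * A := by
  set w : ℂ → ℂ := fun z => p z / (2 * A - p z) with hw
  have hdenom : ∀ z ∈ ball (0:ℂ) (2*R), (2 * (A:ℂ) - p z) ≠ 0 := by
    intro z hz hEq2
    have h1 : ((2 * (A:ℂ) - p z)).re = 2 * A - (p z).re := by simp
    rw [hEq2] at h1
    simp at h1
    have := hbound z hz
    linarith
  have habs : ∀ z ∈ ball (0:ℂ) (2*R), ‖w z‖ < 1 := by
    intro z hz
    have hlt := hbound z hz
    have hns : Complex.normSq (p z) < Complex.normSq (2 * (A:ℂ) - p z) := by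
      simp only [Complex.normSq_apply, Complex.sub_re, Complex.sub_im, Complex.mul_re,
        Complex.mul_im, Complex.ofReal_re, Complex.ofReal_im, Complex.re_ofNat, Complex.im_ofNat]
      nlinarith [hlt, Complex.normSq_nonneg (p z)]
    have h2 : ‖p z‖ < ‖2 * (A:ℂ) - p z‖ := by
      rw [Complex.norm_def, Complex.norm_def]
      exact Real.sqrt_lt_sqrt (Complex.normSq_nonneg _) hns
    rw [hw]
    simp only [norm_div]
    have hpos : 0 < ‖2 * (A:ℂ) - p z‖ :=
      lt_of_le_of_lt (norm_nonneg _) h2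
    rw [div_lt_one hpos]
    exact h2
  have hwd : DifferentiableOn ℂ w (ball (0:ℂ) (2*R)) := by
    apply DifferentiableOn.div hp.differentiableOn
    · exact (differentiable_const _).sub hp |>.differentiableOn
    · exact hdenom
  have hw0 : w 0 = 0 := by simp [hw, hp0]
  have hmaps : MapsTo w (ball (0:ℂ) (2*R)) (ball (w 0) 1) := by
    intro z hz
    rw [hw0, mem_ball_zero_iff]
    exact habs z hz
  intro z hzR
  have hzball : z ∈ ball (0:ℂ) (2*R) := by
    rw [mem_ball_zero_iff]
    calc ‖z‖ = ‖z‖ := rfl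
      _ ≤ R := hzR
      _ < 2 * R := by linarith
  have hschwarz := Complex.dist_le_div_mul_dist_of_mapsTo_ball hwd (hmaps.mono_right ball_subset_closedBall) hzball
  rw [hw0, _root_.dist_zero_right, _root_.dist_zero_right] at hschwarz
  have hwz : ‖w z‖ ≤ 1 / 2 := by
    calc ‖w z‖ = ‖w z‖ := rfl
      _ ≤ 1 / (2*R) * ‖z‖ := hschwarz
      _ ≤ 1 / (2*R) * R := by
          apply mul_le_mul_of_nonneg_left hzR
          positivity
      _ = 1 / 2 := by field_simp
  -- p z * (1 + w z) = 2A * w z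
  have hkey : p z * (1 + w z) = 2 * A * w z := by
    rw [hw]
    have hd := hdenom z hzball
    field_simp
    ring
  have h1w : (1:ℝ) / 2 ≤ ‖1 + w z‖ := by
    have h3 : 1 - ‖w z‖ ≤ ‖1 + w z‖ := by
      simpa using norm_sub_norm_le (1:ℂ) (-(w z))
    have h4 : ‖w z‖ = ‖w z‖ := rfl
    have h5 : ‖1 + w z‖ = ‖1 + w z‖ := rfl
    rw [h4, h5] at h3
    linarith [hwz]
  have habs2 : ‖p z‖ * ‖1 + w z‖ ≤ A := by
    rw [← norm_mul, hkey, norm_mul, norm_mul]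
    have h2A : ‖(2 : ℂ)‖ * ‖(A : ℂ)‖ = 2 * A := by
      simp [Complex.norm_real, abs_of_pos hA]
    calc ‖(2:ℂ)‖ * ‖(A:ℂ)‖ * ‖w z‖
        ≤ 2 * A * (1/2) := by
          rw [h2A]
          apply mul_le_mul_of_nonneg_left hwz (by positivity)
      _ = A := by ring
  nlinarith [norm_nonneg (p z), norm_nonneg (1 + w z)]

/-- An entire function whose real part grows sublinearly is constant. -/
lemma const_of_re_sublinear {g : ℂ → ℂ} (hg : Differentiable ℂ g) {C σ : ℝ}
    (hσ0 : 0 < σ) (hσ1 : σ < 1) (hC : 0 ≤ C)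
    (hre : ∀ z : ℂ, (g z).re ≤ C + ‖z‖ ^ σ) :
    ∀ z, g z = g 0 := by
  set ψ : ℂ → ℂ := fun z => g z - g 0 with hψ
  have hψd : Differentiable ℂ ψ := hg.sub_const _
  have hψ0 : ψ 0 = 0 := by simp [hψ]
  set C' : ℝ := C + |(g 0).re| + 1 with hC'
  have hC'0 : 0 < C' := by positivity
  have hreψ : ∀ z : ℂ, (ψ z).re < C' + ‖z‖ ^ σ := by
    intro z
    have := hre z
    simp only [hψ, Complex.sub_re]
    have habs : -(g 0).re ≤ |(g 0).re| := neg_le_abs _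
    rw [hC']
    linarith
  -- BC bound: for every S ≥ 1 and |z| ≤ S, |ψ z| ≤ 2 * (C' + (2*S)^σ)
  have hBC : ∀ S : ℝ, 1 ≤ S → ∀ z : ℂ, ‖z‖ ≤ S →
      ‖ψ z‖ ≤ 2 * (C' + (2*S) ^ σ) := by
    intro S hS z hzS
    have hSpos : (0:ℝ) < S := by linarith
    have hApos : (0:ℝ) < C' + (2*S) ^ σ := by positivity
    refine borel_caratheodory hψd hψ0 hSpos hApos ?_ z hzS
    intro y hy
    have hyabs : ‖y‖ < 2 * S := mem_ball_zero_iff.mp hy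
    have h1 : ‖y‖ ^ σ ≤ (2*S) ^ σ :=
      Real.rpow_le_rpow (norm_nonneg y) hyabs.le hσ0.le
    have := hreψ y
    linarith
  -- Liouville step
  have hderiv0 : ∀ z₀ : ℂ, deriv ψ z₀ = 0 := by
    intro z₀
    have hbnd : ∀ᶠ S in atTop, ‖deriv ψ z₀‖ ≤ 2 * (C' + ((4:ℝ)*S) ^ σ) / S := by
      filter_upwards [eventually_ge_atTop (1:ℝ), eventually_ge_atTop (‖z₀‖)]
        with S hS1 hSz
      have hSpos : (0:ℝ) < S := by linarith
      have hbd := Complex.norm_deriv_le_of_forall_mem_sphere_norm_le (c := z₀) hSpos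
        (hψd.diffContOnCl) (C := 2 * (C' + ((4:ℝ)*S) ^ σ)) ?_
      · exact hbd
      · intro y hy
        have hyd : dist y z₀ = S := mem_sphere.mp hy
        have hyabs : ‖y‖ ≤ 2 * S := by
          have : ‖y‖ ≤ ‖z₀‖ + ‖y - z₀‖ := by
            calc ‖y‖ = ‖z₀ + (y - z₀)‖ := by ring_nf
              _ ≤ ‖z₀‖ + ‖y - z₀‖ := norm_add_le _ _
          have h2 : ‖y - z₀‖ = S := by rw [← dist_eq_norm]; exact hyd
          calc ‖y‖ = ‖y‖ := rfl
            _ ≤ ‖z₀‖ + S := by rw [← h2]; exact this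
            _ ≤ S + S := by
                have : ‖z₀‖ = ‖z₀‖ := rfl
                linarith [hSz, this ▸ hSz]
            _ = 2 * S := by ring
        have := hBC (2*S) (by linarith) y hyabs
        calc ‖ψ y‖ = ‖ψ y‖ := rfl
          _ ≤ 2 * (C' + (2*(2*S)) ^ σ) := this
          _ = 2 * (C' + ((4:ℝ)*S) ^ σ) := by ring_nf
    have htend : Tendsto (fun S : ℝ => 2 * (C' + ((4:ℝ)*S) ^ σ) / S) atTop (nhds 0) := by
      have h1 : Tendsto (fun S : ℝ => 2 * C' / S) atTop (nhds 0) :=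
        Tendsto.div_atTop tendsto_const_nhds tendsto_id
      have h2 : Tendsto (fun S : ℝ => 2 * ((4:ℝ)*S) ^ σ / S) atTop (nhds 0) := by
        have hEq2 : ∀ᶠ S in atTop, 2 * ((4:ℝ)*S) ^ σ / S = 2 * (4:ℝ) ^ σ * S ^ (σ - 1) := by
          filter_upwards [eventually_gt_atTop (0:ℝ)] with S hS
          rw [Real.mul_rpow (by norm_num) hS.le, Real.rpow_sub hS, Real.rpow_one]
          field_simp
        have h3 : Tendsto (fun S : ℝ => 2 * (4:ℝ) ^ σ * S ^ (σ - 1)) atTop (nhds 0) := by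
          have h4 : Tendsto (fun S : ℝ => S ^ (-(1 - σ))) atTop (nhds 0) :=
            tendsto_rpow_neg_atTop (by linarith)
          have h5 : (fun S : ℝ => S ^ (σ - 1)) = fun S : ℝ => S ^ (-(1-σ)) := by
            funext S; ring_nf
          rw [show (0:ℝ) = 2 * (4:ℝ) ^ σ * 0 by ring]
          exact (h5 ▸ h4).const_mul _
        exact Tendsto.congr' (hEq2.mono fun S h => h.symm) h3
      have := h1.add h2
      simp only [add_zero] at this
      refine this.congr (fun S => ?_)
      field_simp
    have : ‖deriv ψ z₀‖ ≤ 0 := ge_of_tendsto htend hbnd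
    simpa using le_antisymm this (norm_nonneg _)
  intro z
  have : ∀ x, deriv g x = 0 := by
    intro x
    have h1 : deriv ψ x = deriv g x := by
      rw [hψ]
      exact deriv_sub_const _
    rw [← h1]; exact hderiv0 x
  have := is_const_of_deriv_eq_zero hg this z 0
  exact this

lemma multiset_prod_bounds {c : ℝ} : ∀ (s : Multiset ℝ), (∀ x ∈ s, 1 ≤ x ∧ x ≤ c) →
    1 ≤ s.prod ∧ s.prod ≤ c ^ (Multiset.card s) := by
  intro s
  induction s using Multiset.induction_on with
  | empty => intro _; simp
  | cons a t ih =>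
    intro hmem
    obtain ⟨ha1, hac⟩ := hmem a (Multiset.mem_cons_self a t)
    have ht := ih (fun x hx => hmem x (Multiset.mem_cons_of_mem hx))
    rw [Multiset.prod_cons, Multiset.card_cons]
    constructor
    · nlinarith [ht.1]
    · have h1 : (1:ℝ) ≤ c ^ (Multiset.card t) := le_trans ht.1 ht.2
      rw [pow_succ]
      nlinarith [ht.1, ht.2]

lemma abs_linear_prod (M : Multiset ℂ) (z : ℂ) :
    ‖(Multiset.map (fun a => z - a) M).prod‖
      = (Multiset.map (fun a => ‖z - a‖) M).prod := by
  induction M using Multiset.induction_on <;> simp_all [norm_mul]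

/-- An entire function of order `ρ` with `0 < ρ < 1` has infinitely
many zeros. -/
theorem infinitely_many_zeros_of_small_positive_order (f : ℂ → ℂ)
    (hf : Differentiable ℂ f) (ρ : ℝ) (hord : entireOrder f = (ρ : EReal))
    (h0 : 0 < ρ) (h1 : ρ < 1) :
    {w : ℂ | f w = 0}.Infinite := by
  by_contra hinf
  have hfin : {w : ℂ | f w = 0}.Finite := Set.not_infinite.mp hinf
  have hne : ∃ z, f z ≠ 0 := by
    by_contra hz
    push_neg at hz
    have huniv : {w : ℂ | f w = 0} = Set.univ := Set.eq_univ_of_forall (fun w => hz w)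
    exact (huniv ▸ hfin).not_infinite Set.infinite_univ
  obtain ⟨M, h, hhd, hhne, hfac⟩ := factor_finite f hf hfin hne
  obtain ⟨g, hgd, hgexp⟩ := exists_exp_eq h hhd hhne
  set σ : ℝ := (ρ + 1)/2 with hσdef
  have hσ0 : 0 < σ := by rw [hσdef]; linarith
  have hσ1 : σ < 1 := by rw [hσdef]; linarith
  have hρσ : ρ < σ := by rw [hσdef]; linarith
  -- multiset constants
  set C₀ : ℝ := 1 + (Multiset.map norm M).sum with hC₀def
  have hsum0 : 0 ≤ (Multiset.map norm M).sum :=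
    Multiset.sum_nonneg (by
      intro x hx
      obtain ⟨a, _, rfl⟩ := Multiset.mem_map.mp hx
      exact norm_nonneg a)
  have hC₀1 : 1 ≤ C₀ := by rw [hC₀def]; linarith
  have hmemC₀ : ∀ a ∈ M, ‖a‖ ≤ C₀ := by
    intro a haM
    have h1 : ‖a‖ ≤ (Multiset.map norm M).sum :=
      Multiset.single_le_sum (by
        intro x hx
        obtain ⟨b, _, rfl⟩ := Multiset.mem_map.mp hx
        exact norm_nonneg b) _ (Multiset.mem_map_of_mem _ haM)
    rw [hC₀def]; linarith
  set N : ℕ := Multiset.card M with hNdef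
  have hPbounds : ∀ z : ℂ, 2*C₀ ≤ ‖z‖ →
      1 ≤ ‖(Multiset.map (fun a => z - a) M).prod‖ ∧
      ‖(Multiset.map (fun a => z - a) M).prod‖ ≤ (2 * ‖z‖)^N := by
    intro z hz
    have hzC : C₀ ≤ ‖z‖ := by linarith
    rw [abs_linear_prod]
    have hmb := multiset_prod_bounds (c := 2 * ‖z‖)
      (Multiset.map (fun a => ‖z - a‖) M) (by
        intro x hx
        obtain ⟨a, haM, rfl⟩ := Multiset.mem_map.mp hx
        have h1 : ‖a‖ ≤ C₀ := hmemC₀ a haM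
        have h2 : ‖z‖ - ‖a‖ ≤ ‖z - a‖ := by
          have := norm_sub_norm_le z a
          simpa using this
        have h3 : ‖z - a‖ ≤ ‖z‖ + ‖a‖ := by
          have := norm_sub_le z a
          simpa using this
        constructor
        · linarith
        · linarith)
    rwa [Multiset.card_map] at hmb
  -- growth bound from order hypothesis
  have hgrow : ∃ R₁ : ℝ, 2 ≤ R₁ ∧ ∀ z : ℂ, R₁ ≤ ‖z‖ →
      ‖f z‖ ≤ Real.exp (‖z‖ ^ σ) := by
    have hlt : entireOrder f < (σ : EReal) := by
      rw [hord]; exact_mod_cast hρσ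
    rw [entireOrder] at hlt
    have hev := Filter.eventually_lt_of_limsup_lt hlt
    rw [Filter.eventually_atTop] at hev
    obtain ⟨R₀, hR₀⟩ := hev
    refine ⟨max R₀ 2, le_max_right _ _, ?_⟩
    intro z hz
    set r : ℝ := ‖z‖ with hrdef
    have hr2 : 2 ≤ r := le_trans (le_max_right _ _) hz
    have hr1 : (1:ℝ) < r := by linarith
    have hratio : Real.log (Real.log (maxModulus f r)) / Real.log r < σ := by
      have := hR₀ r (le_trans (le_max_left _ _) hz)
      exact_mod_cast this
    have hlogr : 0 < Real.log r := Real.log_pos hr1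
    have hmem : z ∈ Metric.sphere (0:ℂ) r := by
      rw [mem_sphere, Complex.dist_eq, sub_zero]
    have hbdd : BddAbove ((fun w => ‖f w‖) '' Metric.sphere (0:ℂ) r) :=
      ((isCompact_sphere (0:ℂ) r).image
        (continuous_norm.comp hf.continuous)).bddAbove
    have hfM : ‖f z‖ ≤ maxModulus f r := le_csSup hbdd ⟨z, hmem, rfl⟩
    have hrσ1 : 1 ≤ r ^ σ := by
      have := Real.rpow_le_rpow_of_exponent_le hr1.le (le_of_lt hσ0)
      rwa [Real.rpow_zero] at this
    rcases le_or_gt (maxModulus f r) (Real.exp (r ^ σ)) with hM | hM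
    · exact le_trans hfM hM
    · exfalso
      have hMpos : 0 < maxModulus f r := lt_trans (Real.exp_pos _) hM
      have hlogM : r ^ σ < Real.log (maxModulus f r) := (Real.lt_log_iff_exp_lt hMpos).mpr hM
      have h2 : Real.log (r ^ σ) ≤ Real.log (Real.log (maxModulus f r)) :=
        Real.log_le_log (by positivity) hlogM.le
      rw [Real.log_rpow (by linarith : (0:ℝ) < r)] at h2
      have h3 : σ ≤ Real.log (Real.log (maxModulus f r)) / Real.log r := by
        rw [le_div_iff₀ hlogr]; linarith
      linarith
  obtain ⟨R₁, hR₁2, hR₁⟩ := hgrow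
  -- bound on Re g
  set R₂ : ℝ := max R₁ (2*C₀) with hR₂def
  have hR₂0 : 0 ≤ R₂ := le_trans (by linarith) (le_max_left _ _)
  have hre1 : ∀ z : ℂ, R₂ ≤ ‖z‖ → (g z).re ≤ ‖z‖ ^ σ := by
    intro z hz
    have h1 : ‖f z‖ ≤ Real.exp (‖z‖ ^ σ) :=
      hR₁ z (le_trans (le_max_left _ _) hz)
    have h2 : 1 ≤ ‖(Multiset.map (fun a => z - a) M).prod‖ :=
      (hPbounds z (le_trans (le_max_right _ _) hz)).1
    have h3 : ‖f z‖
        = ‖(Multiset.map (fun a => z - a) M).prod‖ * ‖h z‖ := by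
      rw [hfac z, norm_mul]
    have h4 : ‖h z‖ ≤ ‖f z‖ := by
      nlinarith [norm_nonneg (h z)]
    have h5 : ‖h z‖ = Real.exp ((g z).re) := by
      rw [hgexp z, Complex.norm_exp]
    rw [h5] at h4
    exact Real.exp_le_exp.mp (le_trans h4 h1)
  obtain ⟨zB, _, hzBmax⟩ := (isCompact_closedBall (0:ℂ) R₂).exists_isMaxOn
    (Metric.nonempty_closedBall.mpr hR₂0)
    ((Complex.continuous_re.comp hgd.continuous).continuousOn)
  have hzB : ∀ z ∈ Metric.closedBall (0:ℂ) R₂, (g z).re ≤ (g zB).re :=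
    fun z hz => hzBmax hz
  set Cr : ℝ := max ((g zB).re) 0 with hCrdef
  have hre : ∀ z : ℂ, (g z).re ≤ Cr + ‖z‖ ^ σ := by
    intro z
    have hrpow : 0 ≤ ‖z‖ ^ σ := Real.rpow_nonneg (norm_nonneg z) σ
    rcases le_or_gt (‖z‖) R₂ with hcase | hcase
    · have hmem : z ∈ Metric.closedBall (0:ℂ) R₂ := by
        rw [Metric.mem_closedBall, Complex.dist_eq, sub_zero]; exact hcase
      have h6 := hzB z hmem
      have h7 : (g zB).re ≤ Cr := le_max_left _ _
      linarith
    · have h6 := hre1 z hcase.le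
      have h7 : (0:ℝ) ≤ Cr := le_max_right _ _
      linarith
  have hgconst := const_of_re_sublinear hgd hσ0 hσ1 (le_max_right _ _) hre
  set c : ℂ := Complex.exp (g 0) with hcdef
  have hfc : ∀ z, f z = (Multiset.map (fun a => z - a) M).prod * c := by
    intro z
    rw [hfac z, hgexp z, hgconst z]
  have hcpos : 0 < ‖c‖ := by
    rw [hcdef, Complex.norm_exp]; exact Real.exp_pos _
  -- final contradiction: order is too small
  set L : ℝ := |Real.log (‖c‖)| with hLdef
  have hMb : ∀ r : ℝ, max (2*C₀) 2 ≤ r →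
      ‖c‖ ≤ maxModulus f r ∧ maxModulus f r ≤ (2*r)^N * ‖c‖ := by
    intro r hr
    have hr2 : 2 ≤ r := le_trans (le_max_right _ _) hr
    have hr0 : (0:ℝ) ≤ r := by linarith
    have hrC₀ : 2*C₀ ≤ r := le_trans (le_max_left _ _) hr
    have hbdd : BddAbove ((fun w => ‖f w‖) '' Metric.sphere (0:ℂ) r) :=
      ((isCompact_sphere (0:ℂ) r).image
        (continuous_norm.comp hf.continuous)).bddAbove
    constructor
    · have habsr : ‖(r:ℂ)‖ = r := by
        rw [Complex.norm_real, Real.norm_eq_abs]; exact abs_of_nonneg hr0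
      have hmem : (r:ℂ) ∈ Metric.sphere (0:ℂ) r := by
        rw [mem_sphere, Complex.dist_eq, sub_zero, habsr]
      have hm1 : ‖f (r:ℂ)‖ ≤ maxModulus f r := le_csSup hbdd ⟨_, hmem, rfl⟩
      have hm2 : 1 ≤ ‖(Multiset.map (fun a => (r:ℂ) - a) M).prod‖ :=
        (hPbounds _ (by rw [habsr]; exact hrC₀)).1
      have hm3 : ‖f (r:ℂ)‖
          = ‖(Multiset.map (fun a => (r:ℂ) - a) M).prod‖ * ‖c‖ := by
        rw [hfc (r:ℂ), norm_mul]
      nlinarith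
    · apply csSup_le
      · exact Set.Nonempty.image _ (NormedSpace.sphere_nonempty.mpr hr0)
      · rintro y ⟨z, hz, rfl⟩
        have habsz : ‖z‖ = r := by
          rw [mem_sphere, Complex.dist_eq, sub_zero] at hz; exact hz
        have hm2 := (hPbounds z (by rw [habsz]; exact hrC₀)).2
        rw [habsz] at hm2
        show ‖f z‖ ≤ (2*r)^N * ‖c‖
        rw [hfc z, norm_mul]
        exact mul_le_mul_of_nonneg_right hm2 (norm_nonneg c)
  have hL0 : 0 ≤ L := abs_nonneg _
  -- eventually the ratio is at most 2 log log r / log r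
  have hev2 : ∀ᶠ r in atTop, Real.log (Real.log (maxModulus f r)) / Real.log r
      ≤ 2 * Real.log (Real.log r) / Real.log r := by
    filter_upwards [eventually_ge_atTop (max (2*C₀) 2),
      Real.tendsto_log_atTop.eventually_ge_atTop (max ((N:ℝ) * Real.log 2 + L + 1) ((N:ℝ)+1)),
      eventually_gt_atTop (1:ℝ)] with r hr hlogr hr1
    have hlogrpos : 0 < Real.log r := Real.log_pos hr1
    obtain ⟨hMlo, hMhi⟩ := hMb r hr
    have hr2 : 2 ≤ r := le_trans (le_max_right _ _) hr
    have hMpos : 0 < maxModulus f r := lt_of_lt_of_le hcpos hMlo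
    have h2r1 : (1:ℝ) ≤ 2*r := by linarith
    have hlog2r : 0 ≤ Real.log (2*r) := Real.log_nonneg h2r1
    have hup : Real.log (maxModulus f r) ≤ (N:ℝ) * Real.log (2*r) + L := by
      have hstep : Real.log (maxModulus f r) ≤ Real.log ((2*r)^N * ‖c‖) :=
        Real.log_le_log hMpos hMhi
      rw [Real.log_mul (by positivity) (ne_of_gt hcpos), Real.log_pow] at hstep
      have : Real.log (‖c‖) ≤ L := le_abs_self _
      push_cast at hstep ⊢
      linarith
    have hlo : -((N:ℝ) * Real.log (2*r) + L) ≤ Real.log (maxModulus f r) := by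
      have hstep : Real.log (‖c‖) ≤ Real.log (maxModulus f r) :=
        Real.log_le_log hcpos hMlo
      have h9 : -L ≤ Real.log (‖c‖) := neg_abs_le _
      have h10 : 0 ≤ (N:ℝ) * Real.log (2*r) := by positivity
      linarith
    have habslog : |Real.log (maxModulus f r)| ≤ (N:ℝ) * Real.log (2*r) + L :=
      abs_le.mpr ⟨hlo, hup⟩
    -- key: N log 2r + L + 1 ≤ (log r)^2
    have hkey : (N:ℝ) * Real.log (2*r) + L + 1 ≤ (Real.log r)^2 := by
      have hsplit : Real.log (2*r) = Real.log 2 + Real.log r :=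
        Real.log_mul (by norm_num) (by linarith)
      have hlr1 : (N:ℝ) * Real.log 2 + L + 1 ≤ Real.log r :=
        le_trans (le_max_left _ _) hlogr
      have hlr2 : (N:ℝ) + 1 ≤ Real.log r := le_trans (le_max_right _ _) hlogr
      have hN0 : (0:ℝ) ≤ (N:ℝ) := Nat.cast_nonneg N
      nlinarith [hlogrpos]
    have hloglog : Real.log (Real.log (maxModulus f r)) ≤ 2 * Real.log (Real.log r) := by
      have hrw : Real.log (Real.log (maxModulus f r))
          = Real.log (|Real.log (maxModulus f r)|) := (Real.log_abs _).symm
      rw [hrw]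
      have hsq : Real.log ((Real.log r)^2) = 2 * Real.log (Real.log r) := by
        rw [Real.log_pow]; push_cast; ring
      rcases le_or_gt (|Real.log (maxModulus f r)|) 1 with hc1 | hc1
      · have hlhs : Real.log (|Real.log (maxModulus f r)|) ≤ 0 :=
          Real.log_nonpos (abs_nonneg _) hc1
        have hrhs : 0 ≤ 2 * Real.log (Real.log r) := by
          have : (1:ℝ) ≤ Real.log r := by
            have := le_trans (le_max_right _ _) hlogr
            have hN0 : (0:ℝ) ≤ (N:ℝ) := Nat.cast_nonneg N
            linarith
          have := Real.log_nonneg this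
          linarith
        linarith
      · have hstep : Real.log (|Real.log (maxModulus f r)|) ≤ Real.log ((Real.log r)^2) := by
          apply Real.log_le_log (by linarith)
          calc |Real.log (maxModulus f r)| ≤ (N:ℝ) * Real.log (2*r) + L := habslog
            _ ≤ (N:ℝ) * Real.log (2*r) + L + 1 := by linarith
            _ ≤ (Real.log r)^2 := hkey
        rw [hsq] at hstep
        exact hstep
    gcongr
  have htend0 : Tendsto (fun r : ℝ => 2 * Real.log (Real.log r) / Real.log r) atTop (nhds 0) := by
    have h1 : Tendsto (fun y : ℝ => Real.log y / y) atTop (nhds 0) :=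
      Real.isLittleO_log_id_atTop.tendsto_div_nhds_zero
    have h2 := h1.const_mul (2:ℝ)
    rw [mul_zero] at h2
    have h3 : Tendsto (fun y : ℝ => 2 * Real.log y / y) atTop (nhds 0) := by
      refine h2.congr (fun y => ?_)
      ring
    exact h3.comp Real.tendsto_log_atTop
  have hevsmall : ∀ᶠ r in atTop, 2 * Real.log (Real.log r) / Real.log r < ρ/2 :=
    htend0.eventually_lt_const (by linarith)
  have hevρ : ∀ᶠ r in atTop,
      ((Real.log (Real.log (maxModulus f r)) / Real.log r : ℝ) : EReal) ≤ ((ρ/2 : ℝ) : EReal) := by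
    filter_upwards [hev2, hevsmall] with r ha hb
    exact_mod_cast le_of_lt (lt_of_le_of_lt ha hb)
  have hlimsup : entireOrder f ≤ ((ρ/2 : ℝ) : EReal) := by
    rw [entireOrder]
    exact Filter.limsup_le_of_le (by isBoundedDefault) hevρ
  rw [hord] at hlimsup
  have hfinal : ρ ≤ ρ/2 := by exact_mod_cast hlimsup
  linarith
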